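/- For any negative integer α and any integers k, m ≥ −α, ∫₀^∞ L_k^α(x)·L_m^α(x)·x^α·e^{−x} dx = (Γ(k+α+1)/k!)·δ_{k,m}. -/

import Mathlib

open Finset

/-- Generalized Laguerre polynomial `L_k^α(x)`, extended by `0` for negative index `k`. -/
noncomputable def genLaguerre (α : ℝ) (k : ℤ) (x : ℝ) : ℝ :=
  if k < 0 then 0 else
    ∑ ν ∈ Finset.range (k.toNat + 1),
      (ascPochhammer ℝ (k.toNat - ν)).eval (α + ν + 1) /
        ((k.toNat - ν).factorial * ν.factorial) * (-x) ^ ν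

lemma alt_pascal (n : ℕ) (f : ℕ → ℝ) :
    ∑ i ∈ range (n+2), (-1:ℝ)^i * ((n+1).choose i) * f i
    = ∑ i ∈ range (n+1), (-1:ℝ)^i * (n.choose i) * (f i - f (i+1)) := by
  have h1 : ∑ i ∈ range (n+2), (-1:ℝ)^i * (n.choose i) * f i
      = ∑ i ∈ range (n+1), (-1:ℝ)^i * (n.choose i) * f i := by
    rw [sum_range_succ, Nat.choose_succ_self]
    simp
  rw [sum_range_succ' _ (n+1)]
  rw [sum_range_succ' (fun i => (-1:ℝ)^i * (n.choose i) * f i) (n+1)] at h1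
  simp only [Nat.choose_succ_succ, Nat.cast_add, pow_succ] at *
  rw [show ∑ i ∈ range (n+1), (-1:ℝ)^i * -1 * (↑(n.choose i) + ↑(n.choose (i+1))) * f (i+1)
      = (∑ i ∈ range (n+1), -((-1:ℝ)^i * (n.choose i) * f (i+1)))
        + ∑ i ∈ range (n+1), (-1:ℝ)^i * -1 * (n.choose (i+1)) * f (i+1) by
    rw [← sum_add_distrib]; apply sum_congr rfl; intro i _; ring]
  have h2 : (∑ i ∈ range (n+1), (-1:ℝ)^i * -1 * (n.choose (i+1)) * f (i+1))
      + (-1:ℝ)^0 * (n.choose 0) * f 0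
      = ∑ i ∈ range (n+1), (-1:ℝ)^i * (n.choose i) * f i := by
    rw [← h1]
  simp only [Nat.choose_zero_right, Nat.cast_one, pow_zero, one_mul] at *
  rw [add_assoc, h2]
  rw [show ∑ i ∈ range (n+1), (-1:ℝ)^i * (n.choose i) * (f i - f (i+1))
      = ∑ i ∈ range (n+1), ((-((-1:ℝ)^i * (n.choose i) * f (i+1))) + (-1:ℝ)^i * (n.choose i) * f i) from sum_congr rfl (fun i _ => by ring)]
  rw [sum_add_distrib]

lemma alt_choose_real (M : ℕ) :
    ∑ t ∈ range (M+1), (-1:ℝ)^t * (M.choose t) = if M = 0 then 1 else 0 := by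
  have := Int.alternating_sum_range_choose (n := M)
  have h2 : ((∑ i ∈ range (M+1), (-1:ℤ)^i * (M.choose i) : ℤ) : ℝ)
      = ((if M = 0 then (1:ℤ) else 0 : ℤ) : ℝ) := by rw [this]
  push_cast at h2
  simpa using h2

lemma sumS : ∀ (n : ℕ) (c j : ℕ),
    ∑ i ∈ range (n+1), (-1:ℝ)^i * (n.choose i) * ((i+c).choose j)
    = if n ≤ j then (-1:ℝ)^n * (c.choose (j-n)) else 0 := by
  intro n
  induction n with
  | zero => intro c j; simp
  | succ n ih =>
    intro c j
    match j with
    | 0 =>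
      have : ∑ i ∈ range (n+2), (-1:ℝ)^i * ((n+1).choose i) * ((i+c).choose 0)
          = ∑ i ∈ range (n+1+1), (-1:ℝ)^i * ((n+1).choose i) := by
        apply sum_congr rfl; intro i _; simp
      rw [this, alt_choose_real]
      simp
    | j+1 =>
      rw [alt_pascal n (fun i => ((i+c).choose (j+1) : ℝ))]
      have : ∑ i ∈ range (n+1), (-1:ℝ)^i * (n.choose i) *
            (((i+c).choose (j+1) : ℝ) - ((i+1+c).choose (j+1) : ℝ))
          = ∑ i ∈ range (n+1), -((-1:ℝ)^i * (n.choose i) * ((i+c).choose j)) := by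
        apply sum_congr rfl; intro i _
        have : (i+1+c).choose (j+1) = (i+c).choose j + (i+c).choose (j+1) := by
          rw [show i+1+c = (i+c)+1 by omega, Nat.choose_succ_succ]
        rw [this]; push_cast; ring
      rw [this, sum_neg_distrib, ih c j]
      by_cases h : n ≤ j
      · rw [if_pos h, if_pos (by omega), show j+1-(n+1) = j - n by omega]
        ring
      · rw [if_neg h, if_neg (by omega), neg_zero]

lemma sumD (b n p : ℕ) :
    ∑ i ∈ range (n+1), ∑ j ∈ range (p+1),
      (-1:ℝ)^(i+j) * (n.choose i) * (p.choose j)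
        * ((i+j+b).factorial / ((i+b).factorial * (j+b).factorial))
    = if n = p then (n.factorial : ℝ) / ((n+b).factorial) else 0 := by
  have fne : ∀ N : ℕ, ((N.factorial : ℝ) ≠ 0) := fun N => Nat.cast_ne_zero.mpr N.factorial_ne_zero
  -- step 1: swap and evaluate inner sum over i
  rw [Finset.sum_comm]
  have hinner : ∀ j, ∑ i ∈ range (n+1),
      (-1:ℝ)^(i+j) * (n.choose i) * (p.choose j)
        * ((i+j+b).factorial / ((i+b).factorial * (j+b).factorial))
      = ((-1:ℝ)^j * (p.choose j) * (j.factorial / (j+b).factorial)) *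
        ∑ i ∈ range (n+1), (-1:ℝ)^i * (n.choose i) * ((i+(j+b)).choose j) := by
    intro j
    rw [mul_sum]
    apply sum_congr rfl; intro i _
    have key : ((i+j+b).choose j) * j.factorial * (i+b).factorial = (i+j+b).factorial := by
      have h1 : j ≤ i + j + b := by omega
      have := Nat.choose_mul_factorial_mul_factorial h1
      rwa [show i+j+b-j = i+b by omega] at this
    have keyR : ((i+j+b).factorial : ℝ) = ((i+j+b).choose j : ℝ) * j.factorial * (i+b).factorial := by
      exact_mod_cast key.symm
    rw [show i+(j+b) = i+j+b from by omega, keyR, pow_add]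
    field_simp
  simp only [hinner]
  -- step 2: apply sumS
  simp only [sumS n (_ + b) _]
  -- now sum over j of g j where g j = ... * (if n ≤ j then ...)
  by_cases hnp : n ≤ p
  · -- split range
    rw [range_eq_Ico, ← Finset.sum_Ico_consecutive _ (Nat.zero_le n) (by omega : n ≤ p+1)]
    have hz : ∑ j ∈ Finset.Ico 0 n, ((-1:ℝ)^j * (p.choose j) * (j.factorial / (j+b).factorial)) *
        (if n ≤ j then (-1:ℝ)^n * (((j+b).choose (j-n)) : ℝ) else 0) = 0 := by
      apply sum_eq_zero; intro j hj
      rw [Finset.mem_Ico] at hj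
      rw [if_neg (by omega)]; ring
    rw [hz, zero_add, Finset.sum_Ico_eq_sum_range]
    simp only [Nat.add_sub_cancel_left] -- p+1-n? no: Ico n (p+1) length p+1-n
    have hlen : p + 1 - n = (p - n) + 1 := by omega
    rw [hlen]
    have hterm : ∀ t ∈ range ((p-n)+1),
        ((-1:ℝ)^(n+t) * (p.choose (n+t)) * ((n+t).factorial / (n+t+b).factorial)) *
        (if n ≤ n+t then (-1:ℝ)^n * (((n+t+b).choose t) : ℝ) else 0)
        = ((p.factorial : ℝ) / ((p-n).factorial * (n+b).factorial)) *
          ((-1:ℝ)^t * ((p-n).choose t)) := by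
      intro t ht
      rw [mem_range] at ht
      rw [if_pos (by omega)]
      have h1 : n + t ≤ p := by omega
      have h2 : t ≤ n+t+b := by omega
      have h3 : t ≤ p - n := by omega
      rw [Nat.cast_choose ℝ h1, Nat.cast_choose ℝ h2, Nat.cast_choose ℝ h3]
      rw [show p - (n+t) = p - n - t by omega, show n+t+b-t = n+b by omega,
        show (p-n) - t = p - n - t by omega]
      rw [pow_add]
      field_simp
      have hsq : ((-1:ℝ))^n * ((-1:ℝ))^n = 1 := by
        rw [← pow_add, ← two_mul, pow_mul]; norm_num
      linear_combination hsq
    rw [sum_congr rfl hterm, ← mul_sum, alt_choose_real]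
    by_cases hh : n = p
    · rw [if_pos hh, if_pos (by omega), hh]
      simp [Nat.sub_self]
    · rw [if_neg hh, if_neg (by omega), mul_zero]
  · -- p < n : all terms zero
    rw [if_neg (by omega)]
    apply sum_eq_zero; intro j hj
    rw [mem_range] at hj
    rw [if_neg (by omega)]; ring

lemma ascPochhammer_real_eval_eq_prod (n : ℕ) (x : ℝ) :
    (ascPochhammer ℝ n).eval x = ∏ i ∈ range n, (x + i) := by
  induction n with
  | zero => simp
  | succ n ih =>
    rw [ascPochhammer_succ_right, Polynomial.eval_mul, ih, prod_range_succ]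
    simp

lemma genLaguerre_poly_form (b n : ℕ) (hb : 1 ≤ b) (x : ℝ) :
    genLaguerre (-(b:ℝ)) ((n:ℤ) + b) x
      = ∑ i ∈ range (n+1), (-1:ℝ)^(b+i) * (n.choose i) / (b+i).factorial * x^(b+i) := by
  rw [genLaguerre, if_neg (by omega)]
  have htn : ((n:ℤ) + b).toNat = n + b := by omega
  rw [htn]
  rw [range_eq_Ico, ← Finset.sum_Ico_consecutive _ (Nat.zero_le b) (by omega : b ≤ n+b+1)]
  have hz : ∑ ν ∈ Finset.Ico 0 b,
      (ascPochhammer ℝ (n+b-ν)).eval (-(b:ℝ) + ν + 1) /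
        ((n+b-ν).factorial * ν.factorial) * (-x) ^ ν = 0 := by
    apply sum_eq_zero; intro ν hν
    rw [Finset.mem_Ico] at hν
    have hev : (ascPochhammer ℝ (n+b-ν)).eval (-(b:ℝ) + ν + 1) = 0 := by
      rw [ascPochhammer_real_eval_eq_prod]
      apply Finset.prod_eq_zero (i := b - ν - 1) (mem_range.mpr (by omega))
      have : ((b - ν - 1 : ℕ) : ℝ) = (b:ℝ) - ν - 1 := by
        rw [show b - ν - 1 = b - (ν+1) by omega, Nat.cast_sub (by omega : ν + 1 ≤ b)]
        push_cast; ring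
      rw [this]; ring
    rw [hev]; simp
  rw [hz, zero_add, Finset.sum_Ico_eq_sum_range, show n+b+1-b = n+1 by omega]
  apply sum_congr rfl
  intro i hi
  rw [mem_range] at hi
  have h1 : n + b - (b + i) = n - i := by omega
  have h2 : (-(b:ℝ) + ↑(b + i) + 1) = ((i+1 : ℕ) : ℝ) := by push_cast; ring
  rw [h1, h2, ← ascPochhammer_eval_cast, ascPochhammer_nat_eq_ascFactorial]
  have key : (i+1).ascFactorial (n-i) * (i.factorial * (n-i).factorial)
      = (n.choose i * (n-i).factorial) * (i.factorial * (n-i).factorial) := by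
    have k1 : i.factorial * (i+1).ascFactorial (n-i) = n.factorial := by
      have := Nat.factorial_mul_ascFactorial i (n-i)
      rwa [show i + (n-i) = n by omega] at this
    have k2 : n.choose i * i.factorial * (n-i).factorial = n.factorial :=
      Nat.choose_mul_factorial_mul_factorial (by omega : i ≤ n)
    calc (i+1).ascFactorial (n-i) * (i.factorial * (n-i).factorial)
        = (i.factorial * (i+1).ascFactorial (n-i)) * (n-i).factorial := by ring
      _ = n.factorial * (n-i).factorial := by rw [k1]
      _ = (n.choose i * i.factorial * (n-i).factorial) * (n-i).factorial := by rw [k2]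
      _ = (n.choose i * (n-i).factorial) * (i.factorial * (n-i).factorial) := by ring
  have keyN : (i+1).ascFactorial (n-i) = n.choose i * (n-i).factorial :=
    Nat.eq_of_mul_eq_mul_right (by positivity) key
  have keyR : ((i+1).ascFactorial (n-i) : ℝ) = (n.choose i : ℝ) * (n-i).factorial := by
    exact_mod_cast congrArg (fun z : ℕ => (z:ℝ)) keyN
  rw [keyR]
  rw [neg_pow x (b+i)]
  have hfne : ∀ N : ℕ, ((N.factorial : ℝ) ≠ 0) := fun N => Nat.cast_ne_zero.mpr N.factorial_ne_zero
  field_simp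

lemma integrableOn_pow_exp (N : ℕ) :
    MeasureTheory.IntegrableOn (fun x : ℝ => x ^ N * Real.exp (-x)) (Set.Ioi 0) := by
  have h := Real.GammaIntegral_convergent (s := N + 1) (by positivity)
  apply h.congr_fun _ measurableSet_Ioi
  intro x hx
  rw [Set.mem_Ioi] at hx
  simp only []
  rw [show ((N:ℝ) + 1 - 1) = (N:ℝ) by ring, Real.rpow_natCast]
  ring

lemma integral_pow_exp (N : ℕ) :
    ∫ x in Set.Ioi (0:ℝ), x ^ N * Real.exp (-x) = N.factorial := by
  have h := Real.Gamma_eq_integral (s := N + 1) (by positivity)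
  rw [Real.Gamma_nat_eq_factorial] at h
  rw [show ((N:ℝ) + 1 - 1) = (N:ℝ) by ring] at h
  rw [h]
  apply MeasureTheory.setIntegral_congr_fun measurableSet_Ioi
  intro x hx
  rw [Set.mem_Ioi] at hx
  simp only []
  rw [Real.rpow_natCast]
  ring

theorem genLaguerre_orthogonality_neg (α : ℤ) (hα : α < 0) (k m : ℤ) (hk : -α ≤ k) (hm : -α ≤ m) :
    ∫ x in Set.Ioi (0 : ℝ),
        genLaguerre (α : ℝ) k x * genLaguerre (α : ℝ) m x * x ^ α * Real.exp (-x)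
      = (if k = m then Real.Gamma ((k : ℝ) + (α : ℝ) + 1) / (k.toNat.factorial : ℝ) else 0) := by
  set b := (-α).toNat with hbdef
  set n := (k+α).toNat with hndef
  set p := (m+α).toNat with hpdef
  have hb1 : 1 ≤ b := by omega
  have hαb : (α : ℝ) = -(b:ℝ) := by
    have h : α = -(b:ℤ) := by omega
    rw [h]; push_cast; ring
  have hkn : k = (n:ℤ) + b := by omega
  have hmp : m = (p:ℤ) + b := by omega
  have hcong : ∀ x ∈ Set.Ioi (0:ℝ),
      genLaguerre (α:ℝ) k x * genLaguerre (α:ℝ) m x * x ^ α * Real.exp (-x)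
      = ∑ i ∈ range (n+1), ∑ j ∈ range (p+1),
          ((-1:ℝ)^(i+j) * (n.choose i) * (p.choose j)
            / ((i+b).factorial * (j+b).factorial)) * (x^(i+j+b) * Real.exp (-x)) := by
    intro x hx
    rw [Set.mem_Ioi] at hx
    have hxz : x ≠ 0 := ne_of_gt hx
    rw [hαb, hkn, hmp, genLaguerre_poly_form b n hb1 x, genLaguerre_poly_form b p hb1 x]
    have hzp : x ^ (α:ℤ) = (x^b)⁻¹ := by
      rw [show α = -(b:ℤ) by omega, zpow_neg, zpow_natCast]
    rw [hzp, Finset.sum_mul_sum]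
    simp only [Finset.sum_mul]
    apply Finset.sum_congr rfl; intro i _
    apply Finset.sum_congr rfl; intro j _
    rw [Nat.add_comm b i, Nat.add_comm b j]
    have hsgn : ((-1:ℝ))^(i+b) * (-1)^(j+b) = (-1)^(i+j) := by
      rw [← pow_add, show (i+b)+(j+b) = (i+j) + 2*b by omega, pow_add, pow_mul]
      norm_num
    have hpow : x^(i+b) * x^(j+b) * (x^b)⁻¹ = x^(i+j+b) := by
      rw [← pow_add]
      rw [show (i+b)+(j+b) = (i+j+b) + b by omega, pow_add]
      field_simp
    have hfne : ∀ N : ℕ, ((N.factorial : ℝ) ≠ 0) :=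
      fun N => Nat.cast_ne_zero.mpr N.factorial_ne_zero
    calc ((-1:ℝ)^(i+b) * (n.choose i) / (i+b).factorial * x^(i+b)) *
          ((-1:ℝ)^(j+b) * (p.choose j) / (j+b).factorial * x^(j+b)) * (x^b)⁻¹ * Real.exp (-x)
        = (((-1:ℝ)^(i+b) * (-1)^(j+b)) * (n.choose i) * (p.choose j)
            / ((i+b).factorial * (j+b).factorial)) *
          ((x^(i+b) * x^(j+b) * (x^b)⁻¹) * Real.exp (-x)) := by
          field_simp
      _ = ((-1:ℝ)^(i+j) * (n.choose i) * (p.choose j)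
            / ((i+b).factorial * (j+b).factorial)) * (x^(i+j+b) * Real.exp (-x)) := by
          rw [hsgn, hpow]
  rw [MeasureTheory.setIntegral_congr_fun measurableSet_Ioi hcong]
  have hint : ∀ (c : ℝ) (N : ℕ), MeasureTheory.Integrable
      (fun x : ℝ => c * (x^N * Real.exp (-x)))
      (MeasureTheory.volume.restrict (Set.Ioi 0)) :=
    fun c N => ((integrableOn_pow_exp N).const_mul c)
  rw [MeasureTheory.integral_finset_sum _ (fun i _ =>
    MeasureTheory.integrable_finset_sum _ (fun j _ => hint _ _))]
  have hswap : ∀ i ∈ range (n+1),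
      (∫ x in Set.Ioi (0:ℝ), ∑ j ∈ range (p+1),
        ((-1:ℝ)^(i+j) * (n.choose i) * (p.choose j)
          / ((i+b).factorial * (j+b).factorial)) * (x^(i+j+b) * Real.exp (-x)))
      = ∑ j ∈ range (p+1),
        ((-1:ℝ)^(i+j) * (n.choose i) * (p.choose j)
          / ((i+b).factorial * (j+b).factorial)) * ((i+j+b).factorial : ℝ) := by
    intro i _
    rw [MeasureTheory.integral_finset_sum _ (fun j _ => hint _ _)]
    apply Finset.sum_congr rfl; intro j _
    rw [MeasureTheory.integral_const_mul, integral_pow_exp]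
  rw [Finset.sum_congr rfl hswap]
  have hD := sumD b n p
  have : ∑ i ∈ range (n+1), ∑ j ∈ range (p+1),
      ((-1:ℝ)^(i+j) * (n.choose i) * (p.choose j)
        / ((i+b).factorial * (j+b).factorial)) * ((i+j+b).factorial : ℝ)
      = ∑ i ∈ range (n+1), ∑ j ∈ range (p+1),
      (-1:ℝ)^(i+j) * (n.choose i) * (p.choose j)
        * ((i+j+b).factorial / ((i+b).factorial * (j+b).factorial)) := by
    apply Finset.sum_congr rfl; intro i _
    apply Finset.sum_congr rfl; intro j _
    ring
  rw [this, hD]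
  have hiff : (k = m) ↔ (n = p) := by omega
  by_cases hkm : k = m
  · rw [if_pos hkm, if_pos (hiff.mp hkm)]
    have h1 : (k:ℝ) + α + 1 = (n:ℝ) + 1 := by
      rw [hαb, hkn]; push_cast; ring
    have h2 : k.toNat = n + b := by omega
    rw [h1, Real.Gamma_nat_eq_factorial, h2]
  · rw [if_neg hkm, if_neg (fun h => hkm (hiff.mpr h))]
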